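/- Let A and B be finite abelian groups and let Γ = A * B be their free product. Then the kernel of the canonical surjection Γ → A × B equals the subgroup generated by the commutators a b a⁻¹ b⁻¹ with a ∈ A, b ∈ B, and this kernel is a free group of rank (|A| − 1)(|B| − 1). -/

import Mathlib

open Monoid

namespace Stmt1Aux

variable {A B : Type*} [CommGroup A] [CommGroup B]

/-- index type of free generators -/
abbrev S (A B : Type*) [One A] [One B] := {a : A // a ≠ 1} × {b : B // b ≠ 1}

open Classical in
noncomputable def c (a : A) (b : B) : FreeGroup (S A B) :=
  if h : a = 1 ∨ b = 1 then 1
  else .of (⟨a, fun h' => h (Or.inl h')⟩, ⟨b, fun h' => h (Or.inr h')⟩)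

@[simp] lemma c_one_left (b : B) : c (1 : A) b = 1 := dif_pos (Or.inl rfl)
@[simp] lemma c_one_right (a : A) : c a (1 : B) = 1 := dif_pos (Or.inr rfl)

lemma c_ne {a : A} {b : B} (ha : a ≠ 1) (hb : b ≠ 1) :
    c a b = FreeGroup.of (⟨a, ha⟩, ⟨b, hb⟩) := by
  rw [c, dif_neg (by tauto)]

/-- the space: word part × coset label -/
abbrev X (A B : Type*) [CommGroup A] [CommGroup B] := FreeGroup (S A B) × A × B

noncomputable def dA (a' : A) : X A B → X A B :=
  fun p => (p.1 * c p.2.1 p.2.2 * (c (p.2.1 * a') p.2.2)⁻¹, p.2.1 * a', p.2.2)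

def dB (b' : B) : X A B → X A B := fun p => (p.1, p.2.1, p.2.2 * b')

lemma dA_one : dA (1 : A) = (id : X A B → X A B) := by
  funext p; simp [dA]

lemma dA_mul (a₁ a₂ : A) : dA (a₁ * a₂) = (dA a₁ ∘ dA a₂ : X A B → X A B) := by
  funext p
  obtain ⟨w, a, b⟩ := p
  simp only [dA, Function.comp_apply]
  have h : a * a₂ * a₁ = a * (a₁ * a₂) := by rw [mul_assoc, mul_comm a₂ a₁]
  rw [h]
  refine Prod.ext ?_ rfl
  group

lemma dB_one : dB (1 : B) = (id : X A B → X A B) := by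
  funext p; simp [dB]

lemma dB_mul (b₁ b₂ : B) : dB (b₁ * b₂) = (dB b₁ ∘ dB b₂ : X A B → X A B) := by
  funext p; simp [dB, mul_assoc, mul_comm b₂ b₁]

noncomputable def ρA : A →* Equiv.Perm (X A B) where
  toFun a' := ⟨dA a', dA a'⁻¹,
    fun x => by rw [← Function.comp_apply (f := dA a'⁻¹), ← dA_mul, inv_mul_cancel, dA_one]; rfl,
    fun x => by rw [← Function.comp_apply (f := dA a'), ← dA_mul, mul_inv_cancel, dA_one]; rfl⟩
  map_one' := Equiv.ext fun p => by show dA 1 p = p; rw [dA_one]; rfl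
  map_mul' a₁ a₂ := Equiv.ext fun p => by
    show dA (a₁ * a₂) p = dA a₁ (dA a₂ p); rw [dA_mul]; rfl

noncomputable def ρB : B →* Equiv.Perm (X A B) where
  toFun b' := ⟨dB b', dB b'⁻¹,
    fun x => by rw [← Function.comp_apply (f := dB b'⁻¹), ← dB_mul, inv_mul_cancel, dB_one]; rfl,
    fun x => by rw [← Function.comp_apply (f := dB b'), ← dB_mul, mul_inv_cancel, dB_one]; rfl⟩
  map_one' := Equiv.ext fun p => by show dB 1 p = p; rw [dB_one]; rfl
  map_mul' b₁ b₂ := Equiv.ext fun p => by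
    show dB (b₁ * b₂) p = dB b₁ (dB b₂ p); rw [dB_mul]; rfl

noncomputable def ρ : Coprod A B →* Equiv.Perm (X A B) := Coprod.lift ρA ρB

@[simp] lemma ρ_inl (a' : A) (p : X A B) :
    ρ (Coprod.inl a') p = (p.1 * c p.2.1 p.2.2 * (c (p.2.1 * a') p.2.2)⁻¹, p.2.1 * a', p.2.2) := by
  rw [ρ, Coprod.lift_apply_inl]; rfl

@[simp] lemma ρ_inr (b' : B) (p : X A B) :
    ρ (Coprod.inr b') p = (p.1, p.2.1, p.2.2 * b') := by
  rw [ρ, Coprod.lift_apply_inr]; rfl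

noncomputable def φ : FreeGroup (S A B) →* Coprod A B :=
  FreeGroup.lift fun s =>
    Coprod.inl s.1.1 * Coprod.inr s.2.1 * (Coprod.inl s.1.1 : Coprod A B)⁻¹ *
      (Coprod.inr s.2.1 : Coprod A B)⁻¹

def σ : S A B → S A B := fun s =>
  (⟨s.1.1⁻¹, inv_ne_one.2 s.1.2⟩, ⟨s.2.1⁻¹, inv_ne_one.2 s.2.2⟩)

@[simp] lemma σ_σ (s : S A B) : σ (σ s) = s := by
  simp [σ]

@[simp] lemma pure_eq_of {α : Type*} (x : α) : (pure x : FreeGroup α) = FreeGroup.of x := rfl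

noncomputable def ν : FreeGroup (S A B) →* FreeGroup (S A B) :=
  FreeGroup.lift fun s => FreeGroup.of (σ s)

@[simp] lemma ν_of (s : S A B) : ν (FreeGroup.of s) = FreeGroup.of (σ s) :=
  FreeGroup.lift_apply_of

lemma ν_ν_of (s : S A B) : ν (ν (FreeGroup.of s)) = FreeGroup.of s := by simp

lemma ν_ν (u : FreeGroup (S A B)) : ν (ν u) = u := by
  induction u using FreeGroup.induction_on with
  | C1 => simp
  | of s => simp
  | inv_of s h => rw [map_inv, map_inv, ν_ν_of]
  | mul x y hx hy => rw [map_mul, map_mul, hx, hy]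

lemma ν_injective : Function.Injective (ν : FreeGroup (S A B) →* FreeGroup (S A B)) :=
  Function.LeftInverse.injective ν_ν

lemma φ_of (s : S A B) : φ (FreeGroup.of s) =
    Coprod.inl s.1.1 * Coprod.inr s.2.1 * (Coprod.inl s.1.1 : Coprod A B)⁻¹ *
      (Coprod.inr s.2.1 : Coprod A B)⁻¹ :=
  FreeGroup.lift_apply_of

lemma key (u : FreeGroup (S A B)) : ∀ w : FreeGroup (S A B),
    ρ (φ u) (w, 1, 1) = (w * ν u⁻¹, 1, 1) := by
  induction u using FreeGroup.induction_on with
  | C1 => intro w; simp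
  | of s =>
    intro w
    rw [φ_of, ← map_inv, ← map_inv]
    simp only [map_mul, Equiv.Perm.mul_apply, ρ_inl, ρ_inr, c_one_left, c_one_right,
      one_mul, mul_one, inv_mul_cancel, inv_one, mul_inv_cancel]
    rw [c_ne (inv_ne_one.2 s.1.2) (inv_ne_one.2 s.2.2), map_inv, ν_of]
    rfl
  | inv_of s h =>
    intro w
    rw [map_inv, φ_of]
    simp only [mul_inv_rev, inv_inv, ← map_inv, map_mul, Equiv.Perm.mul_apply, ρ_inl, ρ_inr,
      c_one_left, c_one_right, one_mul, mul_one, inv_mul_cancel, inv_one, mul_inv_cancel]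
    rw [c_ne (inv_ne_one.2 s.1.2) (inv_ne_one.2 s.2.2), ν_of]
    rfl
  | mul x y hx hy =>
    intro w
    rw [map_mul, map_mul, Equiv.Perm.mul_apply, hy w, hx (w * ν y⁻¹), mul_inv_rev, map_mul,
      mul_assoc]

lemma φ_injective : Function.Injective (φ : FreeGroup (S A B) →* Coprod A B) := by
  rw [injective_iff_map_eq_one]
  intro u hu
  have h := key u 1
  rw [hu, map_one] at h
  have h1 : (1 : FreeGroup (S A B)) = 1 * ν u⁻¹ := congrArg Prod.fst h
  have h2 : ν u⁻¹ = ν 1 := by rw [map_one]; rw [one_mul] at h1; exact h1.symm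
  have := ν_injective h2
  rwa [inv_eq_one] at this

def T (A B : Type*) [Group A] [Group B] : Set (Coprod A B) :=
  {x : Coprod A B | ∃ (a : A) (b : B),
    x = Coprod.inl a * Coprod.inr b * (Coprod.inl a)⁻¹ * (Coprod.inr b)⁻¹}

noncomputable def N (A B : Type*) [CommGroup A] [CommGroup B] : Subgroup (Coprod A B) :=
  Subgroup.closure (T A B)

lemma mem_T (a : A) (b : B) :
    Coprod.inl a * Coprod.inr b * (Coprod.inl a : Coprod A B)⁻¹ * (Coprod.inr b : Coprod A B)⁻¹
      ∈ T A B := ⟨a, b, rfl⟩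

lemma conj_inl (α : A) {n : Coprod A B} (hn : n ∈ N A B) :
    Coprod.inl α * n * (Coprod.inl α : Coprod A B)⁻¹ ∈ N A B := by
  induction hn using Subgroup.closure_induction with
  | mem x hx =>
    obtain ⟨a, b, rfl⟩ := hx
    have e : Coprod.inl α * (Coprod.inl a * Coprod.inr b * (Coprod.inl a : Coprod A B)⁻¹ *
        (Coprod.inr b : Coprod A B)⁻¹) * (Coprod.inl α : Coprod A B)⁻¹ =
        (Coprod.inl (α * a) * Coprod.inr b * (Coprod.inl (α * a) : Coprod A B)⁻¹ *
          (Coprod.inr b : Coprod A B)⁻¹) *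
        (Coprod.inl α * Coprod.inr b * (Coprod.inl α : Coprod A B)⁻¹ *
          (Coprod.inr b : Coprod A B)⁻¹)⁻¹ := by
      rw [map_mul]; group
    rw [e]
    exact mul_mem (Subgroup.subset_closure (mem_T _ _))
      (inv_mem (Subgroup.subset_closure (mem_T _ _)))
  | one => simpa using one_mem _
  | mul x y hx hy ihx ihy =>
    have e : Coprod.inl α * (x * y) * (Coprod.inl α : Coprod A B)⁻¹ =
        (Coprod.inl α * x * (Coprod.inl α : Coprod A B)⁻¹) *
        (Coprod.inl α * y * (Coprod.inl α : Coprod A B)⁻¹) := by group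
    rw [e]; exact mul_mem ihx ihy
  | inv x hx ih =>
    have e : Coprod.inl α * x⁻¹ * (Coprod.inl α : Coprod A B)⁻¹ =
        (Coprod.inl α * x * (Coprod.inl α : Coprod A B)⁻¹)⁻¹ := by group
    rw [e]; exact inv_mem ih

lemma conj_inr (β : B) {n : Coprod A B} (hn : n ∈ N A B) :
    Coprod.inr β * n * (Coprod.inr β : Coprod A B)⁻¹ ∈ N A B := by
  induction hn using Subgroup.closure_induction with
  | mem x hx =>
    obtain ⟨a, b, rfl⟩ := hx
    have e : Coprod.inr β * (Coprod.inl a * Coprod.inr b * (Coprod.inl a : Coprod A B)⁻¹ *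
        (Coprod.inr b : Coprod A B)⁻¹) * (Coprod.inr β : Coprod A B)⁻¹ =
        (Coprod.inl a * Coprod.inr β * (Coprod.inl a : Coprod A B)⁻¹ *
          (Coprod.inr β : Coprod A B)⁻¹)⁻¹ *
        (Coprod.inl a * Coprod.inr (β * b) * (Coprod.inl a : Coprod A B)⁻¹ *
          (Coprod.inr (β * b) : Coprod A B)⁻¹) := by
      rw [map_mul]; group
    rw [e]
    exact mul_mem (inv_mem (Subgroup.subset_closure (mem_T _ _)))
      (Subgroup.subset_closure (mem_T _ _))
  | one => simpa using one_mem _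
  | mul x y hx hy ihx ihy =>
    have e : Coprod.inr β * (x * y) * (Coprod.inr β : Coprod A B)⁻¹ =
        (Coprod.inr β * x * (Coprod.inr β : Coprod A B)⁻¹) *
        (Coprod.inr β * y * (Coprod.inr β : Coprod A B)⁻¹) := by group
    rw [e]; exact mul_mem ihx ihy
  | inv x hx ih =>
    have e : Coprod.inr β * x⁻¹ * (Coprod.inr β : Coprod A B)⁻¹ =
        (Coprod.inr β * x * (Coprod.inr β : Coprod A B)⁻¹)⁻¹ := by group
    rw [e]; exact inv_mem ih

lemma conj_mem (g : Coprod A B) : ∀ n ∈ N A B, g * n * g⁻¹ ∈ N A B := by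
  induction g using Coprod.induction_on with
  | inl a => exact fun n hn => conj_inl a hn
  | inr b => exact fun n hn => conj_inr b hn
  | mul x y hx hy =>
    intro n hn
    have e : x * y * n * (x * y)⁻¹ = x * (y * n * y⁻¹) * x⁻¹ := by group
    rw [e]
    exact hx _ (hy n hn)

instance N_normal : (N A B).Normal := ⟨fun n hn g => conj_mem g n hn⟩

lemma ker_eq (π : Coprod A B →* A × B)
    (hπ : π = Coprod.lift (MonoidHom.inl A B) (MonoidHom.inr A B)) :
    π.ker = N A B := by
  apply le_antisymm
  · -- ker ≤ N, via the quotient by N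
    set q := QuotientGroup.mk' (N A B) with hq
    have comm : ∀ (a : A) (b : B), Commute (q (Coprod.inl a)) (q (Coprod.inr b)) := by
      intro a b
      rw [← commutatorElement_eq_one_iff_commute, commutatorElement_def,
        ← map_inv q, ← map_inv q, ← map_mul, ← map_mul, ← map_mul, hq,
        QuotientGroup.mk'_apply, QuotientGroup.eq_one_iff]
      exact Subgroup.subset_closure (mem_T a b)
    set h : A × B →* Coprod A B ⧸ N A B :=
      MonoidHom.noncommCoprod (q.comp Coprod.inl) (q.comp Coprod.inr) comm with hh
    have hcomp : h.comp π = q := by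
      rw [hπ]
      apply Coprod.hom_ext
      · ext a
        simp [hh, MonoidHom.noncommCoprod_apply, MonoidHom.inl]
      · ext b
        simp [hh, MonoidHom.noncommCoprod_apply, MonoidHom.inr]
    intro x hx
    have : q x = 1 := by
      rw [← hcomp]
      simp only [MonoidHom.comp_apply]
      rw [MonoidHom.mem_ker.mp hx, map_one]
    rwa [hq, QuotientGroup.mk'_apply, QuotientGroup.eq_one_iff] at this
  · rw [N, Subgroup.closure_le]
    rintro x ⟨a, b, rfl⟩
    have : π (Coprod.inl a * Coprod.inr b * (Coprod.inl a : Coprod A B)⁻¹ *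
        (Coprod.inr b : Coprod A B)⁻¹) = 1 := by
      rw [hπ]
      simp only [map_mul, map_inv, Coprod.lift_apply_inl, Coprod.lift_apply_inr]
      simp [MonoidHom.inl, MonoidHom.inr, Prod.ext_iff]
    exact this

lemma range_φ : (φ : FreeGroup (S A B) →* Coprod A B).range = N A B := by
  rw [φ, FreeGroup.range_lift_eq_closure]
  apply le_antisymm
  · exact Subgroup.closure_mono (by rintro x ⟨s, rfl⟩; exact ⟨s.1.1, s.2.1, rfl⟩)
  · rw [N, Subgroup.closure_le]
    rintro x ⟨a, b, rfl⟩
    by_cases ha : a = 1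
    · subst ha
      simp only [map_one, one_mul, inv_one, mul_one, mul_inv_cancel]
      exact one_mem _
    by_cases hb : b = 1
    · subst hb
      simp only [map_one, one_mul, inv_one, mul_one, mul_inv_cancel]
      exact one_mem _
    · exact Subgroup.subset_closure ⟨(⟨a, ha⟩, ⟨b, hb⟩), rfl⟩

lemma card_S [Finite A] [Finite B] :
    Nat.card (S A B) = (Nat.card A - 1) * (Nat.card B - 1) := by
  classical
  have := Fintype.ofFinite A
  have := Fintype.ofFinite B
  have hA : Nat.card {a : A // a ≠ 1} = Nat.card A - 1 := by
    rw [Nat.card_eq_fintype_card, Nat.card_eq_fintype_card]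
    rw [Fintype.card_subtype_compl, Fintype.card_subtype_eq]
  have hB : Nat.card {b : B // b ≠ 1} = Nat.card B - 1 := by
    rw [Nat.card_eq_fintype_card, Nat.card_eq_fintype_card]
    rw [Fintype.card_subtype_compl, Fintype.card_subtype_eq]
  rw [S, Nat.card_prod, hA, hB]

end Stmt1Aux

open Stmt1Aux in
/-- For finite abelian groups `A`, `B`, the kernel of the canonical surjection
`A * B → A × B` from the free product is generated by the commutators
`a b a⁻¹ b⁻¹` (`a ∈ A`, `b ∈ B`) and is free of rank `(|A|−1)(|B|−1)`. -/
theorem stmt_1 (A B : Type*) [CommGroup A] [CommGroup B] [Finite A] [Finite B]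
    (π : Coprod A B →* A × B)
    (hπ : π = Coprod.lift (MonoidHom.inl A B) (MonoidHom.inr A B)) :
    π.ker = Subgroup.closure
        {x : Coprod A B | ∃ (a : A) (b : B),
          x = Coprod.inl a * Coprod.inr b * (Coprod.inl a)⁻¹ * (Coprod.inr b)⁻¹} ∧
      Nonempty (π.ker ≃* FreeGroup (Fin ((Nat.card A - 1) * (Nat.card B - 1)))) := by
  have hker : π.ker = N A B := ker_eq π hπ
  constructor
  · exact hker
  · have hrange : (φ : FreeGroup (S A B) →* Coprod A B).range = π.ker := by
      rw [hker, range_φ]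
    have e1 : FreeGroup (S A B) ≃* (φ : FreeGroup (S A B) →* Coprod A B).range :=
      MonoidHom.ofInjective φ_injective
    have e2 : ((φ : FreeGroup (S A B) →* Coprod A B).range : Subgroup (Coprod A B)) ≃* π.ker :=
      MulEquiv.subgroupCongr hrange
    have eS : S A B ≃ Fin ((Nat.card A - 1) * (Nat.card B - 1)) :=
      (Finite.equivFin (S A B)).trans (finCongr card_S)
    exact ⟨(e2.symm.trans e1.symm).trans (FreeGroup.freeGroupCongr eS)⟩
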